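/- The map ψ_r : ℝ² → ℝ² defined by ψ_r = T on the closed ball of radius r around 0 (where T = diag(λ₁, λ₂), λ₁ ≥ λ₂ > 0, λ₁λ₂ = 1) and ψ_r(z) = c·z + r²·d·z⁻¹ (complex notation, c = (λ₁+λ₂)/2, d = (λ₁−λ₂)/2) outside this ball, is a bi-Lipschitz homeomorphism of ℝ². -/

import Mathlib

open Matrix MeasureTheory Real

noncomputable section

/-- The Euclidean plane. -/
abbrev E2 := EuclideanSpace ℝ (Fin 2)

/-- `SL(2,ℝ)` as matrices of determinant one. -/
abbrev SL2 := Matrix.SpecialLinearGroup (Fin 2) ℝ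

/-- The seminorm `v ↦ s (M v)`, i.e. `s ∘ M`. -/
def compM (s : Seminorm ℝ E2) (M : Matrix (Fin 2) (Fin 2) ℝ) : Seminorm ℝ E2 :=
  s.comp (Matrix.toEuclideanLin M)

/-- A seminorm is a norm iff it is positive away from the origin. -/
def IsNorm (s : Seminorm ℝ E2) : Prop := ∀ v : E2, v ≠ 0 → 0 < s v

/-- Monotonicity of a functional on seminorms. -/
def Monot (J : Seminorm ℝ E2 → ℝ) : Prop := ∀ s s' : Seminorm ℝ E2, s' ≤ s → J s' ≤ J s

/-- Degree 2 homogeneity of a functional on seminorms. -/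
def Homog (J : Seminorm ℝ E2 → ℝ) : Prop :=
  ∀ (c : NNReal) (s : Seminorm ℝ E2), J (c • s) = (c : ℝ) ^ 2 * J s

/-- `SL₂`-invariance of a functional on seminorms. -/
def SL2inv (J : Seminorm ℝ E2 → ℝ) : Prop :=
  ∀ (s : Seminorm ℝ E2) (T : SL2), J (compM s (T : Matrix (Fin 2) (Fin 2) ℝ)) = J s

/-- The Reshetnyak energy `I²₊(s) = max_{v ∈ S¹} s(v)²`. -/
def Iplus (s : Seminorm ℝ E2) : ℝ := ⨆ v : Metric.sphere (0 : E2) 1, (s (v : E2)) ^ 2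

/-- The unit ball of a seminorm. -/
def unitBallS (s : Seminorm ℝ E2) : Set E2 := {v | s v ≤ 1}

/-- The ellipse `M(D̄)` is inscribed in the unit ball of `s`. -/
def ellipseIn (s : Seminorm ℝ E2) (M : Matrix (Fin 2) (Fin 2) ℝ) : Prop :=
  (Matrix.toEuclideanLin M) '' (Metric.closedBall 0 1) ⊆ unitBallS s

/-- The area of the largest ellipse inscribed in the unit ball of `s`
(the area of the Loewner ellipse); the ellipse `M(D̄)` has area `π |det M|`. -/
def LoewnerArea (s : Seminorm ℝ E2) : ℝ :=
  sSup {a : ℝ | ∃ M : Matrix (Fin 2) (Fin 2) ℝ, ellipseIn s M ∧ a = π * |M.det|}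

/-- The inscribed Riemannian (Ivanov) Jacobian `J^i(s) = π / |L|`. -/
def Ji (s : Seminorm ℝ E2) : ℝ := π / LoewnerArea s

/-- `s` is isotropic: some round disc `t·D̄` is inscribed in the unit ball of `s` and has at
least the area of every inscribed ellipse, i.e. the Loewner ellipse is a round disc. -/
def Isotropic (s : Seminorm ℝ E2) : Prop :=
  ∃ t : ℝ, 0 < t ∧ Metric.closedBall (0 : E2) t ⊆ unitBallS s ∧
    ∀ M : Matrix (Fin 2) (Fin 2) ℝ, ellipseIn s M → π * |M.det| ≤ π * t ^ 2

/-- A Jacobian (definition of area): monotone, degree-2 homogeneous, `SL₂`-invariant,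
normalized on the Euclidean norm. -/
def IsJacobian (J : Seminorm ℝ E2 → ℝ) : Prop :=
  (∀ s, 0 ≤ J s) ∧ Monot J ∧ Homog J ∧ SL2inv J ∧ J (normSeminorm ℝ E2) = 1

/-- The map `ψ_r`: the linear map `diag(λ₁, λ₂)` on the closed `r`-ball, and
`z ↦ c z + r² d z⁻¹` outside it. -/
def psir (l1 l2 r : ℝ) (z : ℂ) : ℂ :=
  if ‖z‖ ≤ r then ((l1 * z.re : ℝ) : ℂ) + ((l2 * z.im : ℝ) : ℂ) * Complex.I
  else (((l1 + l2) / 2 : ℝ) : ℂ) * z + (r : ℂ) ^ 2 * (((l1 - l2) / 2 : ℝ) : ℂ) * z⁻¹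

namespace Stmt17Aux

noncomputable def Tm (l1 l2 : ℝ) (z : ℂ) : ℂ :=
  ((l1 * z.re : ℝ) : ℂ) + ((l2 * z.im : ℝ) : ℂ) * Complex.I

noncomputable def fm (l1 l2 r : ℝ) (z : ℂ) : ℂ :=
  (((l1 + l2) / 2 : ℝ) : ℂ) * z + (r : ℂ) ^ 2 * (((l1 - l2) / 2 : ℝ) : ℂ) * z⁻¹

lemma sq_le' {a b : ℝ} (hb : 0 ≤ b) (h : a ^ 2 ≤ b ^ 2) : a ≤ b := by
  nlinarith [abs_nonneg a]

@[simp] lemma Tm_re (l1 l2 : ℝ) (z : ℂ) : (Tm l1 l2 z).re = l1 * z.re := by simp [Tm]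
@[simp] lemma Tm_im (l1 l2 : ℝ) (z : ℂ) : (Tm l1 l2 z).im = l2 * z.im := by simp [Tm]

lemma Tm_sub (l1 l2 : ℝ) (z w : ℂ) : Tm l1 l2 z - Tm l1 l2 w = Tm l1 l2 (z - w) := by
  apply Complex.ext <;> simp <;> ring

lemma abs_Tm_le {l1 l2 : ℝ} (h2 : 0 ≤ l2) (h12 : l2 ≤ l1) (z : ℂ) :
    ‖Tm l1 l2 z‖ ≤ l1 * ‖z‖ := by
  apply sq_le' (mul_nonneg (le_trans h2 h12) (norm_nonneg z))
  rw [mul_pow, Complex.sq_norm, Complex.sq_norm, Complex.normSq_apply, Complex.normSq_apply]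
  simp only [Tm_re, Tm_im]
  nlinarith [mul_nonneg (by nlinarith : (0:ℝ) ≤ l1 ^ 2 - l2 ^ 2) (sq_nonneg z.im)]

lemma le_abs_Tm {l1 l2 : ℝ} (h2 : 0 ≤ l2) (h12 : l2 ≤ l1) (z : ℂ) :
    l2 * ‖z‖ ≤ ‖Tm l1 l2 z‖ := by
  apply sq_le' (norm_nonneg _)
  rw [mul_pow, Complex.sq_norm, Complex.sq_norm, Complex.normSq_apply, Complex.normSq_apply]
  simp only [Tm_re, Tm_im]
  nlinarith [mul_nonneg (by nlinarith : (0:ℝ) ≤ l1 ^ 2 - l2 ^ 2) (sq_nonneg z.re)]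

lemma fm_sub_fm {z w : ℂ} (l1 l2 r : ℝ) (hz : z ≠ 0) (hw : w ≠ 0) :
    fm l1 l2 r z - fm l1 l2 r w =
      (z - w) * ((((l1 + l2) / 2 : ℝ) : ℂ) - (r : ℂ) ^ 2 * (((l1 - l2) / 2 : ℝ) : ℂ) / (z * w)) := by
  unfold fm
  field_simp
  ring

lemma factor_bounds {l1 l2 r : ℝ} (h12 : l2 ≤ l1) (h2 : 0 < l2) (hr : 0 < r) {z w : ℂ}
    (hz : r ≤ ‖z‖) (hw : r ≤ ‖w‖) :
    l2 ≤ ‖(((l1 + l2) / 2 : ℝ) : ℂ) - (r : ℂ) ^ 2 * (((l1 - l2) / 2 : ℝ) : ℂ) / (z * w)‖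
    ∧ ‖(((l1 + l2) / 2 : ℝ) : ℂ) - (r : ℂ) ^ 2 * (((l1 - l2) / 2 : ℝ) : ℂ) / (z * w)‖
      ≤ l1 := by
  have hz0 : (0:ℝ) < ‖z‖ := lt_of_lt_of_le hr hz
  have hw0 : (0:ℝ) < ‖w‖ := lt_of_lt_of_le hr hw
  have hX : ‖(r : ℂ) ^ 2 * (((l1 - l2) / 2 : ℝ) : ℂ) / (z * w)‖ ≤ (l1 - l2) / 2 := by
    rw [norm_div, norm_mul, norm_mul, norm_pow, Complex.norm_real, Real.norm_eq_abs, Complex.norm_real, Real.norm_eq_abs,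
      abs_of_pos hr, abs_of_nonneg (by linarith : (0:ℝ) ≤ (l1 - l2)/2)]
    rw [div_le_iff₀ (by positivity)]
    have : r ^ 2 ≤ ‖z‖ * ‖w‖ := by nlinarith
    nlinarith
  have habsc : ‖(((l1 + l2) / 2 : ℝ) : ℂ)‖ = (l1 + l2) / 2 := by
    rw [Complex.norm_real, Real.norm_eq_abs, abs_of_pos (by linarith)]
  constructor
  · have := norm_sub_norm_le ((((l1 + l2) / 2 : ℝ) : ℂ))
      ((r : ℂ) ^ 2 * (((l1 - l2) / 2 : ℝ) : ℂ) / (z * w))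
    rw [habsc] at this
    linarith
  · have := norm_sub_le ((((l1 + l2) / 2 : ℝ) : ℂ))
      ((r : ℂ) ^ 2 * (((l1 - l2) / 2 : ℝ) : ℂ) / (z * w))
    rw [habsc] at this
    linarith

noncomputable def Q (l1 l2 r : ℝ) (w : ℂ) : ℝ := (w.re / (l1 * r)) ^ 2 + (w.im / (l2 * r)) ^ 2

lemma Q_Tm {l1 l2 r : ℝ} (h12 : l2 ≤ l1) (h2 : 0 < l2) (hr : 0 < r) (z : ℂ) :
    Q l1 l2 r (Tm l1 l2 z) = Complex.normSq z / r ^ 2 := by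
  have h1 : (0:ℝ) < l1 := lt_of_lt_of_le h2 h12
  unfold Q
  rw [Complex.normSq_apply]
  simp only [Tm_re, Tm_im]
  field_simp

lemma fm_re {l1 l2 r : ℝ} (z : ℂ) :
    (fm l1 l2 r z).re
      = (l1 + l2) / 2 * z.re + r ^ 2 * ((l1 - l2) / 2) * (z.re / Complex.normSq z) := by
  unfold fm
  simp [← Complex.ofReal_pow, Complex.add_re, Complex.mul_re, Complex.inv_re, Complex.inv_im, Complex.ofReal_re,
    Complex.ofReal_im]
  all_goals ring

lemma fm_im {l1 l2 r : ℝ} (z : ℂ) :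
    (fm l1 l2 r z).im
      = (l1 + l2) / 2 * z.im - r ^ 2 * ((l1 - l2) / 2) * (z.im / Complex.normSq z) := by
  unfold fm
  simp [← Complex.ofReal_pow, Complex.add_im, Complex.mul_im, Complex.inv_re, Complex.inv_im, Complex.ofReal_re,
    Complex.ofReal_im]
  all_goals ring

lemma Tm_eq_fm {l1 l2 r : ℝ} (hr : 0 < r) {p : ℂ} (hp : ‖p‖ = r) :
    Tm l1 l2 p = fm l1 l2 r p := by
  have hn : Complex.normSq p = r ^ 2 := by rw [← Complex.sq_norm, hp]
  apply Complex.ext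
  · rw [Tm_re, fm_re, hn]
    field_simp
    ring
  · rw [Tm_im, fm_im, hn]
    field_simp
    ring

lemma Q_fm_expr {l1 l2 r : ℝ} (h12 : l2 ≤ l1) (h2 : 0 < l2) (hr : 0 < r) {z : ℂ} (hz : z ≠ 0) :
    Q l1 l2 r (fm l1 l2 r z) =
      (z.re ^ 2 * ((l1 + l2) / 2 * Complex.normSq z + r ^ 2 * ((l1 - l2) / 2)) ^ 2 * (l2 * r) ^ 2
        + z.im ^ 2 * ((l1 + l2) / 2 * Complex.normSq z - r ^ 2 * ((l1 - l2) / 2)) ^ 2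
          * (l1 * r) ^ 2)
      / ((Complex.normSq z) ^ 2 * (l1 * r) ^ 2 * (l2 * r) ^ 2) := by
  have h1 : (0:ℝ) < l1 := lt_of_lt_of_le h2 h12
  have hn : 0 < Complex.normSq z := Complex.normSq_pos.2 hz
  unfold Q
  rw [fm_re, fm_im]
  field_simp

lemma key_ineq {l1 l2 r n : ℝ} (h12 : l2 ≤ l1) (h2 : 0 < l2) (hdet : l1 * l2 = 1) (hr : 0 < r)
    (hn : r ^ 2 ≤ n) :
    l1 ^ 2 * r ^ 2 * n ≤ ((l1 + l2) / 2 * n + r ^ 2 * ((l1 - l2) / 2)) ^ 2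
    ∧ l2 ^ 2 * r ^ 2 * n ≤ ((l1 + l2) / 2 * n - r ^ 2 * ((l1 - l2) / 2)) ^ 2 := by
  set c : ℝ := (l1 + l2) / 2 with hc
  set d : ℝ := (l1 - l2) / 2 with hd
  have hd0 : 0 ≤ d := by rw [hd]; linarith
  have hcd : d ≤ c := by rw [hc, hd]; linarith
  have hc0 : 0 < c := by rw [hc]; linarith
  have hkey : 0 ≤ (c ^ 2 * n - d ^ 2 * r ^ 2) * (n - r ^ 2) := by
    apply mul_nonneg _ (by linarith)
    have hdc2 : d ^ 2 ≤ c ^ 2 := pow_le_pow_left₀ hd0 hcd 2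
    nlinarith [mul_le_mul_of_nonneg_left hn (sq_nonneg c),
      mul_le_mul_of_nonneg_right hdc2 (sq_nonneg r)]
  constructor
  · have h : l1 = c + d := by rw [hc, hd]; ring
    rw [h]; nlinarith [hkey]
  · have h : l2 = c - d := by rw [hc, hd]; ring
    rw [h]; nlinarith [hkey]

lemma key_ineq' {l1 l2 r n : ℝ} (h12 : l2 ≤ l1) (h2 : 0 < l2) (hdet : l1 * l2 = 1) (hr : 0 < r)
    (hn0 : 0 < n) (hn : n ≤ r ^ 2) (hann : r ^ 2 * ((l1 - l2) / 2) ≤ (l1 + l2) / 2 * n) :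
    ((l1 + l2) / 2 * n + r ^ 2 * ((l1 - l2) / 2)) ^ 2 ≤ l1 ^ 2 * r ^ 2 * n
    ∧ ((l1 + l2) / 2 * n - r ^ 2 * ((l1 - l2) / 2)) ^ 2 ≤ l2 ^ 2 * r ^ 2 * n := by
  set c : ℝ := (l1 + l2) / 2 with hc
  set d : ℝ := (l1 - l2) / 2 with hd
  have hd0 : 0 ≤ d := by rw [hd]; linarith
  have hcd : d ≤ c := by rw [hc, hd]; linarith
  have hc0 : 0 < c := by rw [hc]; linarith
  have hkey : (c ^ 2 * n - d ^ 2 * r ^ 2) * (n - r ^ 2) ≤ 0 := by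
    apply mul_nonpos_of_nonneg_of_nonpos _ (by linarith)
    nlinarith [mul_le_mul_of_nonneg_left hann hc0.le,
      mul_nonneg (mul_nonneg (sub_nonneg.2 hcd) (sq_nonneg r)) hd0]
  constructor
  · have h : l1 = c + d := by rw [hc, hd]; ring
    rw [h]; nlinarith [hkey]
  · have h : l2 = c - d := by rw [hc, hd]; ring
    rw [h]; nlinarith [hkey]

lemma Q_fm_ge {l1 l2 r : ℝ} (h12 : l2 ≤ l1) (h2 : 0 < l2) (hdet : l1 * l2 = 1) (hr : 0 < r)
    {z : ℂ} (hz : r ≤ ‖z‖) :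
    1 ≤ Q l1 l2 r (fm l1 l2 r z) := by
  have h1 : (0:ℝ) < l1 := lt_of_lt_of_le h2 h12
  have hz0 : z ≠ 0 := by
    intro h; rw [h] at hz; simp at hz; linarith
  set n : ℝ := Complex.normSq z with hnn
  have hn0 : 0 < n := Complex.normSq_pos.2 hz0
  have hnr : r ^ 2 ≤ n := by
    rw [hnn, ← Complex.sq_norm]
    exact pow_le_pow_left₀ hr.le hz 2
  have huv : z.re ^ 2 + z.im ^ 2 = n := by rw [hnn, Complex.normSq_apply]; ring
  obtain ⟨k1, k2⟩ := key_ineq (n := n) h12 h2 hdet hr hnr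
  rw [Q_fm_expr h12 h2 hr hz0, le_div_iff₀ (by positivity)]
  simp only [← hnn, one_mul]
  calc n ^ 2 * (l1 * r) ^ 2 * (l2 * r) ^ 2
      = z.re ^ 2 * (l1 ^ 2 * r ^ 2 * n) * (l2 * r) ^ 2
        + z.im ^ 2 * (l2 ^ 2 * r ^ 2 * n) * (l1 * r) ^ 2 := by
        linear_combination (-(l1 ^ 2 * l2 ^ 2 * r ^ 4 * n)) * huv
    _ ≤ z.re ^ 2 * ((l1 + l2) / 2 * n + r ^ 2 * ((l1 - l2) / 2)) ^ 2 * (l2 * r) ^ 2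
        + z.im ^ 2 * ((l1 + l2) / 2 * n - r ^ 2 * ((l1 - l2) / 2)) ^ 2 * (l1 * r) ^ 2 := by
        apply add_le_add
        · exact mul_le_mul_of_nonneg_right
            (mul_le_mul_of_nonneg_left k1 (sq_nonneg z.re)) (sq_nonneg _)
        · exact mul_le_mul_of_nonneg_right
            (mul_le_mul_of_nonneg_left k2 (sq_nonneg z.im)) (sq_nonneg _)

lemma Q_fm_le {l1 l2 r : ℝ} (h12 : l2 ≤ l1) (h2 : 0 < l2) (hdet : l1 * l2 = 1) (hr : 0 < r)
    {z : ℂ} (hz0 : z ≠ 0) (hz : ‖z‖ ≤ r)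
    (hann : r ^ 2 * ((l1 - l2) / 2) ≤ (l1 + l2) / 2 * Complex.normSq z) :
    Q l1 l2 r (fm l1 l2 r z) ≤ 1 := by
  have h1 : (0:ℝ) < l1 := lt_of_lt_of_le h2 h12
  set n : ℝ := Complex.normSq z with hnn
  have hn0 : 0 < n := Complex.normSq_pos.2 hz0
  have hnr : n ≤ r ^ 2 := by
    rw [hnn, ← Complex.sq_norm]
    exact pow_le_pow_left₀ (norm_nonneg z) hz 2
  have huv : z.re ^ 2 + z.im ^ 2 = n := by rw [hnn, Complex.normSq_apply]; ring
  obtain ⟨k1, k2⟩ := key_ineq' (n := n) h12 h2 hdet hr hn0 hnr hann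
  rw [Q_fm_expr h12 h2 hr hz0, div_le_one (by positivity)]
  simp only [← hnn]
  calc z.re ^ 2 * ((l1 + l2) / 2 * n + r ^ 2 * ((l1 - l2) / 2)) ^ 2 * (l2 * r) ^ 2
        + z.im ^ 2 * ((l1 + l2) / 2 * n - r ^ 2 * ((l1 - l2) / 2)) ^ 2 * (l1 * r) ^ 2
      ≤ z.re ^ 2 * (l1 ^ 2 * r ^ 2 * n) * (l2 * r) ^ 2
        + z.im ^ 2 * (l2 ^ 2 * r ^ 2 * n) * (l1 * r) ^ 2 := by
        apply add_le_add
        · exact mul_le_mul_of_nonneg_right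
            (mul_le_mul_of_nonneg_left k1 (sq_nonneg z.re)) (sq_nonneg _)
        · exact mul_le_mul_of_nonneg_right
            (mul_le_mul_of_nonneg_left k2 (sq_nonneg z.im)) (sq_nonneg _)
    _ = n ^ 2 * (l1 * r) ^ 2 * (l2 * r) ^ 2 := by
        linear_combination (l1 ^ 2 * l2 ^ 2 * r ^ 4 * n) * huv

lemma seg_dist {a b : ℂ} {t : ℝ} (h0 : 0 ≤ t) (h1 : t ≤ 1) :
    ‖a - (a + (t : ℂ) * (b - a))‖ + ‖(a + (t : ℂ) * (b - a)) - b‖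
      = ‖a - b‖ := by
  have e1 : a - (a + (t : ℂ) * (b - a)) = (t : ℂ) * (a - b) := by ring
  have e2 : (a + (t : ℂ) * (b - a)) - b = ((1 - t : ℝ) : ℂ) * (a - b) := by push_cast; ring
  rw [e1, e2, norm_mul, norm_mul, Complex.norm_real, Real.norm_eq_abs, Complex.norm_real, Real.norm_eq_abs, abs_of_nonneg h0,
    abs_of_nonneg (by linarith)]
  ring

lemma exists_seg_abs {r : ℝ} {z w : ℂ} (hz : ‖z‖ ≤ r) (hw : r ≤ ‖w‖) :
    ∃ t : ℝ, 0 ≤ t ∧ t ≤ 1 ∧ ‖z + (t : ℂ) * (w - z)‖ = r := by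
  have hcont : Continuous fun t : ℝ => ‖z + (t : ℂ) * (w - z)‖ := by
    apply continuous_norm.comp
    continuity
  have := intermediate_value_Icc (zero_le_one (α := ℝ)) hcont.continuousOn
  have hmem : r ∈ Set.Icc (‖z + ((0:ℝ) : ℂ) * (w - z)‖)
      (‖z + ((1:ℝ) : ℂ) * (w - z)‖) := by
    have e : z + ((1:ℝ) : ℂ) * (w - z) = w := by push_cast; ring
    constructor
    · simpa using hz
    · rw [e]; exact hw
  obtain ⟨t, ht, hgt⟩ := this hmem
  exact ⟨t, ht.1, ht.2, hgt⟩

lemma exists_seg_Q {l1 l2 r : ℝ} {a b : ℂ} (ha : Q l1 l2 r a ≤ 1) (hb : 1 ≤ Q l1 l2 r b) :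
    ∃ t : ℝ, 0 ≤ t ∧ t ≤ 1 ∧ Q l1 l2 r (a + (t : ℂ) * (b - a)) = 1 := by
  have hcont : Continuous fun t : ℝ => Q l1 l2 r (a + (t : ℂ) * (b - a)) := by
    unfold Q
    apply Continuous.add <;> apply Continuous.pow <;> apply Continuous.div_const
    · exact Complex.continuous_re.comp (by continuity)
    · exact Complex.continuous_im.comp (by continuity)
  have := intermediate_value_Icc (zero_le_one (α := ℝ)) hcont.continuousOn
  have hmem : (1:ℝ) ∈ Set.Icc (Q l1 l2 r (a + ((0:ℝ) : ℂ) * (b - a)))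
      (Q l1 l2 r (a + ((1:ℝ) : ℂ) * (b - a))) := by
    constructor
    · simpa using ha
    · have : a + ((1:ℝ) : ℂ) * (b - a) = b := by ring_nf; simp
      rw [this]; exact hb
  obtain ⟨t, ht, hgt⟩ := this hmem
  exact ⟨t, ht.1, ht.2, hgt⟩

noncomputable def psir' (l1 l2 r : ℝ) (z : ℂ) : ℂ :=
  if ‖z‖ ≤ r then ((l1 * z.re : ℝ) : ℂ) + ((l2 * z.im : ℝ) : ℂ) * Complex.I
  else (((l1 + l2) / 2 : ℝ) : ℂ) * z + (r : ℂ) ^ 2 * (((l1 - l2) / 2 : ℝ) : ℂ) * z⁻¹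

lemma psir'_eq_Tm {l1 l2 r : ℝ} {z : ℂ} (h : ‖z‖ ≤ r) :
    psir' l1 l2 r z = Tm l1 l2 z := by
  rw [psir', if_pos h]; rfl

lemma psir'_eq_fm {l1 l2 r : ℝ} (hr : 0 < r) {z : ℂ} (h : r ≤ ‖z‖) :
    psir' l1 l2 r z = fm l1 l2 r z := by
  by_cases h' : ‖z‖ ≤ r
  · rw [psir', if_pos h']
    have : ‖z‖ = r := le_antisymm h' h
    exact Tm_eq_fm hr this
  · rw [psir', if_neg h']; rfl

section Main
variable {l1 l2 r : ℝ} (h12 : l2 ≤ l1) (h2 : 0 < l2) (hdet : l1 * l2 = 1) (hr : 0 < r)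

include h12 h2 hdet hr

lemma psir_lip (z w : ℂ) :
    ‖psir' l1 l2 r z - psir' l1 l2 r w‖ ≤ l1 * ‖z - w‖ := by
  have h1 : (0:ℝ) < l1 := lt_of_lt_of_le h2 h12
  have Hout : ∀ a b : ℂ, r ≤ ‖a‖ → r ≤ ‖b‖ →
      ‖fm l1 l2 r a - fm l1 l2 r b‖ ≤ l1 * ‖a - b‖ := by
    intro a b ha hb
    have ha0 : a ≠ 0 := by intro h; rw [h] at ha; simp at ha; linarith
    have hb0 : b ≠ 0 := by intro h; rw [h] at hb; simp at hb; linarith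
    rw [fm_sub_fm l1 l2 r ha0 hb0, norm_mul]
    rw [mul_comm l1 _]
    exact mul_le_mul_of_nonneg_left (factor_bounds h12 h2 hr ha hb).2 (norm_nonneg _)
  have Hmix : ∀ a b : ℂ, ‖a‖ ≤ r → r ≤ ‖b‖ →
      ‖psir' l1 l2 r a - psir' l1 l2 r b‖ ≤ l1 * ‖a - b‖ := by
    intro a b ha hb
    obtain ⟨t, ht0, ht1, htp⟩ := exists_seg_abs ha hb
    set p : ℂ := a + (t : ℂ) * (b - a) with hp
    have h1' : ‖psir' l1 l2 r a - psir' l1 l2 r p‖ ≤ l1 * ‖a - p‖ := by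
      rw [psir'_eq_Tm ha, psir'_eq_Tm (le_of_eq htp), Tm_sub]
      exact abs_Tm_le h2.le h12 _
    have h2' : ‖psir' l1 l2 r p - psir' l1 l2 r b‖ ≤ l1 * ‖p - b‖ := by
      rw [psir'_eq_fm hr (ge_of_eq htp), psir'_eq_fm hr hb]
      exact Hout p b (ge_of_eq htp) hb
    calc ‖psir' l1 l2 r a - psir' l1 l2 r b‖
        ≤ ‖psir' l1 l2 r a - psir' l1 l2 r p‖
          + ‖psir' l1 l2 r p - psir' l1 l2 r b‖ := by
          simpa using norm_add_le (psir' l1 l2 r a - psir' l1 l2 r p)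
            (psir' l1 l2 r p - psir' l1 l2 r b)
      _ ≤ l1 * ‖a - p‖ + l1 * ‖p - b‖ := add_le_add h1' h2'
      _ = l1 * (‖a - p‖ + ‖p - b‖) := by ring
      _ = l1 * ‖a - b‖ := by rw [hp, seg_dist ht0 ht1]
  rcases le_or_gt (‖z‖) r with hz | hz <;> rcases le_or_gt (‖w‖) r with hw | hw
  · rw [psir'_eq_Tm hz, psir'_eq_Tm hw, Tm_sub]
    exact abs_Tm_le h2.le h12 _
  · exact Hmix z w hz hw.le
  · rw [show z - w = -(w - z) by ring, norm_neg,
      show psir' l1 l2 r z - psir' l1 l2 r w = -(psir' l1 l2 r w - psir' l1 l2 r z) by ring,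
      norm_neg]
    exact Hmix w z hw hz.le
  · rw [psir'_eq_fm hr hz.le, psir'_eq_fm hr hw.le]
    exact Hout z w hz.le hw.le

lemma psir_antilip (z w : ℂ) :
    l2 * ‖z - w‖ ≤ ‖psir' l1 l2 r z - psir' l1 l2 r w‖ := by
  have h1 : (0:ℝ) < l1 := lt_of_lt_of_le h2 h12
  have Hout : ∀ a b : ℂ, r ≤ ‖a‖ → r ≤ ‖b‖ →
      l2 * ‖a - b‖ ≤ ‖fm l1 l2 r a - fm l1 l2 r b‖ := by
    intro a b ha hb
    have ha0 : a ≠ 0 := by intro h; rw [h] at ha; simp at ha; linarith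
    have hb0 : b ≠ 0 := by intro h; rw [h] at hb; simp at hb; linarith
    rw [fm_sub_fm l1 l2 r ha0 hb0, norm_mul, mul_comm l2 _]
    exact mul_le_mul_of_nonneg_left (factor_bounds h12 h2 hr ha hb).1 (norm_nonneg _)
  have Hmix : ∀ a b : ℂ, ‖a‖ ≤ r → r ≤ ‖b‖ →
      l2 * ‖a - b‖ ≤ ‖psir' l1 l2 r a - psir' l1 l2 r b‖ := by
    intro a b ha hb
    have hQa : Q l1 l2 r (Tm l1 l2 a) ≤ 1 := by
      rw [Q_Tm h12 h2 hr]
      rw [div_le_one (by positivity), ← Complex.sq_norm]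
      exact pow_le_pow_left₀ (norm_nonneg a) ha 2
    have hQb : 1 ≤ Q l1 l2 r (fm l1 l2 r b) := Q_fm_ge h12 h2 hdet hr hb
    obtain ⟨t, ht0, ht1, htQ⟩ :=
      exists_seg_Q (l1 := l1) (l2 := l2) (r := r) hQa hQb
    set P : ℂ := Tm l1 l2 a + (t : ℂ) * (fm l1 l2 r b - Tm l1 l2 a) with hP
    set p : ℂ := ((P.re / l1 : ℝ) : ℂ) + ((P.im / l2 : ℝ) : ℂ) * Complex.I with hpdef
    have hTp : Tm l1 l2 p = P := by
      apply Complex.ext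
      · rw [Tm_re]; simp [hpdef]; field_simp
      · rw [Tm_im]; simp [hpdef]; field_simp
    have hnp : Complex.normSq p = r ^ 2 := by
      have hQP : Q l1 l2 r P = 1 := htQ
      have : Complex.normSq p = r ^ 2 * Q l1 l2 r P := by
        rw [Complex.normSq_apply, Q]
        simp [hpdef]
        field_simp
      rw [this, hQP, mul_one]
    have habs_p : ‖p‖ = r := by
      have h := Complex.sq_norm p
      rw [hnp] at h
      nlinarith [norm_nonneg p]
    have hfp : fm l1 l2 r p = P := by rw [← Tm_eq_fm hr habs_p]; exact hTp
    have e1 : l2 * ‖a - p‖ ≤ ‖Tm l1 l2 a - P‖ := by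
      rw [← hTp, Tm_sub]
      exact le_abs_Tm h2.le h12 _
    have e2 : l2 * ‖p - b‖ ≤ ‖P - fm l1 l2 r b‖ := by
      rw [← hfp]
      exact Hout p b (ge_of_eq habs_p) hb
    rw [psir'_eq_Tm ha, psir'_eq_fm hr hb]
    calc l2 * ‖a - b‖
        ≤ l2 * (‖a - p‖ + ‖p - b‖) := by
          apply mul_le_mul_of_nonneg_left _ h2.le
          simpa using norm_add_le (a - p) (p - b)
      _ = l2 * ‖a - p‖ + l2 * ‖p - b‖ := by ring
      _ ≤ ‖Tm l1 l2 a - P‖ + ‖P - fm l1 l2 r b‖ := add_le_add e1 e2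
      _ = ‖Tm l1 l2 a - fm l1 l2 r b‖ := by rw [hP]; exact seg_dist ht0 ht1
  rcases le_or_gt (‖z‖) r with hz | hz <;> rcases le_or_gt (‖w‖) r with hw | hw
  · rw [psir'_eq_Tm hz, psir'_eq_Tm hw, Tm_sub]
    exact le_abs_Tm h2.le h12 _
  · exact Hmix z w hz hw.le
  · rw [show z - w = -(w - z) by ring, norm_neg,
      show psir' l1 l2 r z - psir' l1 l2 r w = -(psir' l1 l2 r w - psir' l1 l2 r z) by ring,
      norm_neg]
    exact Hmix w z hw hz.le
  · rw [psir'_eq_fm hr hz.le, psir'_eq_fm hr hw.le]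
    exact Hout z w hz.le hw.le

end Main

lemma fm_mul_self {l1 l2 r : ℝ} {z : ℂ} (hz : z ≠ 0) :
    fm l1 l2 r z * z
      = (((l1 + l2) / 2 : ℝ) : ℂ) * z ^ 2 + (r : ℂ) ^ 2 * (((l1 - l2) / 2 : ℝ) : ℂ) := by
  unfold fm
  field_simp


section Main2
variable {l1 l2 r : ℝ} (h12 : l2 ≤ l1) (h2 : 0 < l2) (hdet : l1 * l2 = 1) (hr : 0 < r)

include h12 h2 hdet hr

lemma root_case {w : ℂ} (hQ : 1 < Q l1 l2 r w) {z0 : ℂ} (hz0 : z0 ≠ 0)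
    (hq : (((l1 + l2) / 2 : ℝ) : ℂ) * z0 ^ 2 + (r : ℂ) ^ 2 * (((l1 - l2) / 2 : ℝ) : ℂ)
      = w * z0) :
    ∃ z, psir' l1 l2 r z = w := by
  have h1 : (0:ℝ) < l1 := lt_of_lt_of_le h2 h12
  have hc0 : (0:ℝ) < (l1 + l2) / 2 := by linarith
  have hd0 : (0:ℝ) ≤ (l1 - l2) / 2 := by linarith
  have hfz0 : fm l1 l2 r z0 = w := mul_right_cancel₀ hz0 (by rw [fm_mul_self hz0, hq])
  rcases lt_or_ge r (‖z0‖) with h | h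
  · exact ⟨z0, by rw [psir'_eq_fm hr h.le, hfz0]⟩
  rcases le_or_gt (r ^ 2 * ((l1 - l2) / 2)) ((l1 + l2) / 2 * Complex.normSq z0) with hann | hann
  · exact absurd (hfz0 ▸ Q_fm_le h12 h2 hdet hr hz0 h hann) (by linarith)
  have hn0 : 0 < Complex.normSq z0 := Complex.normSq_pos.2 hz0
  have hdpos : (0:ℝ) < (l1 - l2) / 2 := by nlinarith
  set a : ℝ := r ^ 2 * ((l1 - l2) / 2) / ((l1 + l2) / 2) with ha
  have ha0 : 0 < a := by positivity
  set z3 : ℂ := ((a : ℝ) : ℂ) / z0 with hz3def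
  have hz3 : z3 ≠ 0 := div_ne_zero (Complex.ofReal_ne_zero.2 ha0.ne') hz0
  have hCa : (((l1 + l2) / 2 : ℝ) : ℂ) * ((a : ℝ) : ℂ)
      = (r : ℂ) ^ 2 * (((l1 - l2) / 2 : ℝ) : ℂ) := by
    have hne : ((l1 : ℂ) + l2) ≠ 0 := by
      have h' : ((l1 + l2 : ℝ) : ℂ) ≠ 0 := Complex.ofReal_ne_zero.2 (by linarith)
      push_cast at h'
      exact h'
    rw [ha]
    push_cast
    field_simp
  have hz3sq : z3 ^ 2 * z0 ^ 2 = ((a : ℝ) : ℂ) ^ 2 := by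
    rw [hz3def]; field_simp
  have hz3z : z3 * z0 ^ 2 = ((a : ℝ) : ℂ) * z0 := by
    rw [hz3def]; field_simp; all_goals ring
  have key : (((l1 + l2) / 2 : ℝ) : ℂ) * ((a : ℝ) : ℂ) ^ 2
      + (r : ℂ) ^ 2 * (((l1 - l2) / 2 : ℝ) : ℂ) * z0 ^ 2 = w * (((a : ℝ) : ℂ) * z0) := by
    linear_combination ((a : ℝ) : ℂ) * hq + (((a : ℝ) : ℂ) - z0 ^ 2) * hCa
  have hfz3 : fm l1 l2 r z3 = w := by
    have final : fm l1 l2 r z3 * (z3 * z0 ^ 2) = w * (z3 * z0 ^ 2) := by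
      calc fm l1 l2 r z3 * (z3 * z0 ^ 2) = (fm l1 l2 r z3 * z3) * z0 ^ 2 := by ring
        _ = ((((l1 + l2) / 2 : ℝ) : ℂ) * z3 ^ 2
            + (r : ℂ) ^ 2 * (((l1 - l2) / 2 : ℝ) : ℂ)) * z0 ^ 2 := by rw [fm_mul_self hz3]
        _ = (((l1 + l2) / 2 : ℝ) : ℂ) * (z3 ^ 2 * z0 ^ 2)
            + (r : ℂ) ^ 2 * (((l1 - l2) / 2 : ℝ) : ℂ) * z0 ^ 2 := by ring
        _ = (((l1 + l2) / 2 : ℝ) : ℂ) * ((a : ℝ) : ℂ) ^ 2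
            + (r : ℂ) ^ 2 * (((l1 - l2) / 2 : ℝ) : ℂ) * z0 ^ 2 := by rw [hz3sq]
        _ = w * (((a : ℝ) : ℂ) * z0) := key
        _ = w * (z3 * z0 ^ 2) := by rw [hz3z]
    exact mul_right_cancel₀ (mul_ne_zero hz3 (pow_ne_zero 2 hz0)) final
  have hn3 : Complex.normSq z3 = a ^ 2 / Complex.normSq z0 := by
    rw [hz3def, map_div₀, Complex.normSq_ofReal]; ring
  rcases lt_or_ge r (‖z3‖) with h3 | h3
  · exact ⟨z3, by rw [psir'_eq_fm hr h3.le, hfz3]⟩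
  exfalso
  have hann3 : r ^ 2 * ((l1 - l2) / 2) ≤ (l1 + l2) / 2 * Complex.normSq z3 := by
    rw [hn3, show (l1 + l2) / 2 * (a ^ 2 / Complex.normSq z0)
        = (l1 + l2) / 2 * a ^ 2 / Complex.normSq z0 from (mul_div_assoc _ _ _).symm,
      le_div_iff₀ hn0]
    have hna : Complex.normSq z0 < a := by
      rw [ha, lt_div_iff₀ hc0]
      linarith [hann]
    have hCa2 : (l1 + l2) / 2 * a ^ 2 = r ^ 2 * ((l1 - l2) / 2) * a := by
      rw [ha]; field_simp
    have hmul := mul_le_mul_of_nonneg_left hna.le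
      (show (0:ℝ) ≤ r ^ 2 * ((l1 - l2) / 2) by positivity)
    linarith
  exact absurd (hfz3 ▸ Q_fm_le h12 h2 hdet hr hz3 h3 hann3) (by linarith)

lemma psir_surj (w : ℂ) : ∃ z, psir' l1 l2 r z = w := by
  have h1 : (0:ℝ) < l1 := lt_of_lt_of_le h2 h12
  by_cases hQ : Q l1 l2 r w ≤ 1
  · refine ⟨((w.re / l1 : ℝ) : ℂ) + ((w.im / l2 : ℝ) : ℂ) * Complex.I, ?_⟩
    set z : ℂ := ((w.re / l1 : ℝ) : ℂ) + ((w.im / l2 : ℝ) : ℂ) * Complex.I with hz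
    have hzre : z.re = w.re / l1 := by simp [hz]
    have hzim : z.im = w.im / l2 := by simp [hz]
    have hnz : Complex.normSq z = r ^ 2 * Q l1 l2 r w := by
      rw [Complex.normSq_apply, Q, hzre, hzim]
      field_simp
    have habs : ‖z‖ ≤ r := by
      apply sq_le' hr.le
      rw [Complex.sq_norm, hnz]
      nlinarith
    rw [psir'_eq_Tm habs]
    apply Complex.ext
    · rw [Tm_re, hzre]; field_simp
    · rw [Tm_im, hzim]; field_simp
  · push_neg at hQ
    have hw0 : w ≠ 0 := by
      intro h
      rw [h] at hQ
      unfold Q at hQ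
      simp at hQ
      linarith
    have hc0 : (0:ℝ) < (l1 + l2) / 2 := by linarith
    set C : ℂ := ((((l1 + l2) / 2 : ℝ)) : ℂ) with hCC
    have hcne : C ≠ 0 := Complex.ofReal_ne_zero.2 hc0.ne'
    obtain ⟨s, hs⟩ := IsAlgClosed.exists_pow_nat_eq
      (w ^ 2 - 4 * C * (r : ℂ) ^ 2 * ((((l1 - l2) / 2 : ℝ)) : ℂ)) (n := 2) (by norm_num)
    set z1 : ℂ := (w + s) / (2 * C) with hz1
    set z2 : ℂ := (w - s) / (2 * C) with hz2
    have h2cz1 : 2 * C * z1 = w + s := by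
      rw [hz1]; field_simp; all_goals ring
    have h2cz2 : 2 * C * z2 = w - s := by
      rw [hz2]; field_simp; all_goals ring
    have hq1 : C * z1 ^ 2 + (r : ℂ) ^ 2 * ((((l1 - l2) / 2 : ℝ)) : ℂ) = w * z1 := by
      apply mul_right_cancel₀ (show (4 : ℂ) * C ≠ 0 by simp [hcne])
      linear_combination (2 * C * z1 - w + s) * h2cz1 + hs
    have hq2 : C * z2 ^ 2 + (r : ℂ) ^ 2 * ((((l1 - l2) / 2 : ℝ)) : ℂ) = w * z2 := by
      apply mul_right_cancel₀ (show (4 : ℂ) * C ≠ 0 by simp [hcne])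
      linear_combination (2 * C * z2 - w - s) * h2cz2 + hs
    by_cases hz10 : z1 = 0
    · have hz20 : z2 ≠ 0 := by
        intro hz20
        apply hw0
        have hsum : C * (z1 + z2) = w := by
          linear_combination (1/2 : ℂ) * h2cz1 + (1/2 : ℂ) * h2cz2
        rw [hz10, hz20] at hsum
        simpa using hsum.symm
      exact root_case h12 h2 hdet hr hQ hz20 hq2
    · exact root_case h12 h2 hdet hr hQ hz10 hq1

end Main2

end Stmt17Aux

/-- `ψ_r` is a bi-Lipschitz homeomorphism of the plane. -/
theorem stmt17 (l1 l2 r : ℝ) (h12 : l2 ≤ l1) (h2 : 0 < l2) (hdet : l1 * l2 = 1) (hr : 0 < r) :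
    ∃ K : NNReal, 0 < K ∧ LipschitzWith K (psir l1 l2 r) ∧
      Function.Bijective (psir l1 l2 r) ∧ AntilipschitzWith K (psir l1 l2 r) := by
  have h1 : (0:ℝ) < l1 := lt_of_lt_of_le h2 h12
  have hpe : psir l1 l2 r = Stmt17Aux.psir' l1 l2 r := rfl
  have hcoe : ((⟨l1, h1.le⟩ : NNReal) : ℝ) = l1 := rfl
  have hanti : AntilipschitzWith ⟨l1, h1.le⟩ (psir l1 l2 r) := by
    apply AntilipschitzWith.of_le_mul_dist
    intro x y
    rw [hpe, Complex.dist_eq, Complex.dist_eq]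
    have h := Stmt17Aux.psir_antilip h12 h2 hdet hr x y
    have h' := mul_le_mul_of_nonneg_left h h1.le
    calc ‖x - y‖ = l1 * (l2 * ‖x - y‖) := by
          rw [← mul_assoc, hdet, one_mul]
      _ ≤ l1 * ‖Stmt17Aux.psir' l1 l2 r x - Stmt17Aux.psir' l1 l2 r y‖ := h'
  refine ⟨⟨l1, h1.le⟩, ?_, ?_, ⟨hanti.injective, ?_⟩, hanti⟩
  · exact_mod_cast h1
  · apply LipschitzWith.of_dist_le_mul
    intro x y
    rw [hpe, Complex.dist_eq, Complex.dist_eq]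
    exact Stmt17Aux.psir_lip h12 h2 hdet hr x y
  · intro w
    obtain ⟨z, hz⟩ := Stmt17Aux.psir_surj h12 h2 hdet hr w
    exact ⟨z, by rw [hpe, hz]⟩
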